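/- Horizontal cone invariance and expansion in the repelling sectors: Let q ≥ 1 be an integer, λ, μ ∈ ℂ with |λ| = 1, and constants ε₁, m, M, N ≥ 0 with 2N + |μ| < 1/2. Let x ∈ ℂ satisfy |1 + (q+1)x^q| − m|x|^{2q} − M|x|^{2q+2} ≥ 1 + (ε₁/2)|x|^q. Suppose G_x, G_y, P_x, P_y ∈ ℂ satisfy |G_x| ≤ m|x|^{2q}, |G_y| ≤ M|x|^{2q+2}, |P_x| ≤ N, |P_y| ≤ N. For any (ξ, η) ∈ ℂ² with |ξ| > |η|, define ξ' = λ(1 + (q+1)x^q + G_x)·ξ + λ·G_y·η and η' = P_x·ξ + (μ + P_y)·η. Then |η'| < |ξ'| and max(|ξ'|, |η'|) ≥ (1 + (ε₁/2)|x|^q)·max(|ξ|, |η|). -/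

import Mathlib

open Metric Filter Topology Set

noncomputable section

lemma abs_sub_le_abs_add' (u v : ℂ) : ‖u‖ - ‖v‖ ≤ ‖u + v‖ := by
  have h := norm_add_le (u + v) (-v)
  simp at h
  linarith

/-- **Horizontal cone invariance and expansion in the repelling sectors.** The derivative of
the normal-form semi-parabolic Hénon map, sending `(ξ, η)` to
`(λ(1 + (q+1)x^q + G_x)ξ + λG_yη, P_xξ + (μ + P_y)η)`, maps the horizontal cone
`{|ξ| > |η|}` into itself and expands the max-norm by at least `1 + (ε₁/2)|x|^q`. -/
theorem horizontal_cone_expansion (q : ℕ) (hq : 1 ≤ q) (lam mu : ℂ)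
    (hlam : ‖lam‖ = 1) (eps1 m M N : ℝ)
    (heps1 : 0 ≤ eps1) (hm : 0 ≤ m) (hM : 0 ≤ M) (hN : 0 ≤ N)
    (hNmu : 2 * N + ‖mu‖ < 1 / 2)
    (x : ℂ)
    (hx : 1 + eps1 / 2 * ‖x‖ ^ q ≤
      ‖1 + ((q : ℂ) + 1) * x ^ q‖ - m * ‖x‖ ^ (2 * q) -
        M * ‖x‖ ^ (2 * q + 2))
    (Gx Gy Px Py : ℂ)
    (hGx : ‖Gx‖ ≤ m * ‖x‖ ^ (2 * q))
    (hGy : ‖Gy‖ ≤ M * ‖x‖ ^ (2 * q + 2))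
    (hPx : ‖Px‖ ≤ N) (hPy : ‖Py‖ ≤ N)
    (ξ η : ℂ) (hcone : ‖η‖ < ‖ξ‖) :
    ‖Px * ξ + (mu + Py) * η‖ <
      ‖lam * (1 + ((q : ℂ) + 1) * x ^ q + Gx) * ξ + lam * Gy * η‖ ∧
    (1 + eps1 / 2 * ‖x‖ ^ q) * max (‖ξ‖) (‖η‖) ≤
      max (‖lam * (1 + ((q : ℂ) + 1) * x ^ q + Gx) * ξ + lam * Gy * η‖)
        (‖Px * ξ + (mu + Py) * η‖) := by
  set A := ‖1 + ((q : ℂ) + 1) * x ^ q‖ with hA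
  set a := ‖ξ‖ with ha
  set b := ‖η‖ with hb
  have hb0 : 0 ≤ b := norm_nonneg η
  have hxq : 0 ≤ eps1 / 2 * ‖x‖ ^ q := by positivity
  -- lower bound for ξ'
  have hBG : A - m * ‖x‖ ^ (2 * q) ≤ ‖1 + ((q : ℂ) + 1) * x ^ q + Gx‖ := by
    have := abs_sub_le_abs_add' (1 + ((q : ℂ) + 1) * x ^ q) Gx
    linarith
  have h1 : (A - m * ‖x‖ ^ (2 * q)) * a - M * ‖x‖ ^ (2 * q + 2) * b ≤
      ‖lam * (1 + ((q : ℂ) + 1) * x ^ q + Gx) * ξ + lam * Gy * η‖ := by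
    have htri := abs_sub_le_abs_add'
      (lam * (1 + ((q : ℂ) + 1) * x ^ q + Gx) * ξ) (lam * Gy * η)
    have e1 : ‖lam * (1 + ((q : ℂ) + 1) * x ^ q + Gx) * ξ‖ =
        ‖1 + ((q : ℂ) + 1) * x ^ q + Gx‖ * a := by
      simp [map_mul, hlam, ha]
    have e2 : ‖lam * Gy * η‖ = ‖Gy‖ * b := by
      simp [map_mul, hlam, hb]
    have h3 : (A - m * ‖x‖ ^ (2 * q)) * a ≤
        ‖1 + ((q : ℂ) + 1) * x ^ q + Gx‖ * a :=
      mul_le_mul_of_nonneg_right hBG (norm_nonneg ξ)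
    have h4 : ‖Gy‖ * b ≤ M * ‖x‖ ^ (2 * q + 2) * b :=
      mul_le_mul_of_nonneg_right hGy hb0
    rw [e1, e2] at htri
    linarith
  have hkey : (1 + eps1 / 2 * ‖x‖ ^ q) * a ≤
      ‖lam * (1 + ((q : ℂ) + 1) * x ^ q + Gx) * ξ + lam * Gy * η‖ := by
    have hba : b ≤ a := le_of_lt hcone
    have : (1 + eps1 / 2 * ‖x‖ ^ q) * a ≤
        (A - m * ‖x‖ ^ (2 * q)) * a - M * ‖x‖ ^ (2 * q + 2) * b := by
      have hMx : 0 ≤ M * ‖x‖ ^ (2 * q + 2) := by positivity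
      nlinarith [norm_nonneg ξ]
    linarith
  -- upper bound for η'
  have h2 : ‖Px * ξ + (mu + Py) * η‖ ≤ N * a + (‖mu‖ + N) * b := by
    have htri := norm_add_le (Px * ξ) ((mu + Py) * η)
    have e1 : ‖Px * ξ‖ = ‖Px‖ * a := by simp [map_mul, ha]
    have e2 : ‖(mu + Py) * η‖ = ‖mu + Py‖ * b := by simp [map_mul, hb]
    have h5 : ‖mu + Py‖ ≤ ‖mu‖ + N :=
      le_trans (norm_add_le mu Py) (by linarith)
    rw [e1, e2] at htri
    nlinarith [norm_nonneg ξ]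
  have hlt : ‖Px * ξ + (mu + Py) * η‖ <
      ‖lam * (1 + ((q : ℂ) + 1) * x ^ q + Gx) * ξ + lam * Gy * η‖ := by
    have : N * a + (‖mu‖ + N) * b < (1 + eps1 / 2 * ‖x‖ ^ q) * a := by
      nlinarith [norm_nonneg ξ, norm_nonneg mu]
    linarith
  refine ⟨hlt, ?_⟩
  have hmax : max a b = a := max_eq_left (le_of_lt hcone)
  rw [hmax]
  exact le_max_of_le_left hkey
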